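/- Let {X_i}_{i≥0} be a Markov chain over the nonnegative integers and φ, ψ > 0 constants with φ·ψ < 1. Suppose for every i > 0: (1) X_i can be modeled as a sum of independent Poisson (Bernoulli) trials depending only on X_{i−1}; (2) E[X_{2i+1} | X_{2i}] ≤ φ·X_{2i}; (3) E[X_{2i} | X_{2i−1}] ≤ ψ·X_{2i−1}. Then there exists a constant C_{φψ} > 1 such that for any fixed r > C_{φψ}, if X_0 = O(r), then Σ_{i=0}^{r} X_i = O(r·log r) with probability at least 1 − 2·exp(−3r). -/

import Mathlib

open MeasureTheory ProbabilityTheory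
open scoped ENNReal

/-- The distribution of a sum of independent Poisson (Bernoulli) trials with success
probabilities `q i`. -/
noncomputable def poissonBinomial {m : ℕ} (q : Fin m → ENNReal) (h : ∀ i, q i ≤ 1) :
    Measure ℕ :=
  Measure.map (fun b : Fin m → Bool => (Finset.univ.filter fun i => b i).card)
    (Measure.pi fun i => (PMF.bernoulli (q i).toNNReal
      (by simpa using ENNReal.toNNReal_mono ENNReal.one_ne_top (h i))).toMeasure)

/-- A measure on `ℕ` is the law of a sum of independent Poisson trials. -/
def IsPoissonBinomial (ν : Measure ℕ) : Prop :=
  ∃ (m : ℕ) (q : Fin m → ENNReal) (h : ∀ i, q i ≤ 1), ν = poissonBinomial q h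

namespace Stmt7Aux

/-! ### Poisson binomial facts -/

lemma bern_singleton {p : ℝ≥0∞} (h : p ≤ 1) (b : Bool) :
    (PMF.bernoulli p.toNNReal (le_trans (ENNReal.toNNReal_mono ENNReal.one_ne_top h) (le_of_eq ENNReal.toNNReal_one))).toMeasure {b} = bif b then p else 1 - p := by
  rw [PMF.toMeasure_apply_singleton _ _ (measurableSet_singleton b), PMF.bernoulli_apply]
  have hp : p ≠ ⊤ := ne_top_of_le_ne_top ENNReal.one_ne_top h
  cases b <;> simp [ENNReal.coe_sub, ENNReal.coe_toNNReal hp]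

lemma pi_singleton {m : ℕ} (q : Fin m → ℝ≥0∞) (hq : ∀ i, q i ≤ 1) (b : Fin m → Bool) :
    (Measure.pi fun i => (PMF.bernoulli (q i).toNNReal (le_trans (ENNReal.toNNReal_mono ENNReal.one_ne_top (hq i)) (le_of_eq ENNReal.toNNReal_one))).toMeasure) {b}
      = ∏ i, (bif b i then q i else 1 - q i) := by
  have : ({b} : Set (Fin m → Bool)) = Set.pi Set.univ (fun i => {b i}) := by
    ext c; simp [funext_iff]
  rw [this, Measure.pi_pi]
  exact Finset.prod_congr rfl fun i _ => bern_singleton (hq i) _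

lemma pi_lintegral_prod {m : ℕ} (q : Fin m → ℝ≥0∞) (hq : ∀ i, q i ≤ 1)
    (g : Fin m → Bool → ℝ≥0∞) :
    ∫⁻ b, (∏ i, g i (b i)) ∂(Measure.pi fun i => (PMF.bernoulli (q i).toNNReal (le_trans (ENNReal.toNNReal_mono ENNReal.one_ne_top (hq i)) (le_of_eq ENNReal.toNNReal_one))).toMeasure)
      = ∏ i, ((1 - q i) * g i false + q i * g i true) := by
  rw [lintegral_fintype]
  have h1 : ∀ b : Fin m → Bool,
      (∏ i, g i (b i)) * (Measure.pi fun i => (PMF.bernoulli (q i).toNNReal (le_trans (ENNReal.toNNReal_mono ENNReal.one_ne_top (hq i)) (le_of_eq ENNReal.toNNReal_one))).toMeasure) {b}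
        = ∏ i, (g i (b i) * (bif b i then q i else 1 - q i)) := by
    intro b
    rw [pi_singleton q hq b, Finset.prod_mul_distrib]
  simp_rw [h1]
  have key := Finset.prod_univ_sum (fun _ : Fin m => (Finset.univ : Finset Bool))
      (fun i y => g i y * (bif y then q i else 1 - q i))
  rw [Fintype.piFinset_univ] at key
  rw [← key]
  refine Finset.prod_congr rfl fun i _ => ?_
  rw [Fintype.sum_bool]
  simp only [Bool.cond_true, Bool.cond_false]
  ring

lemma pi_integral_prod {m : ℕ} (q : Fin m → ℝ≥0∞) (hq : ∀ i, q i ≤ 1)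
    (g : Fin m → Bool → ℝ) :
    ∫ b, (∏ i, g i (b i)) ∂(Measure.pi fun i => (PMF.bernoulli (q i).toNNReal (le_trans (ENNReal.toNNReal_mono ENNReal.one_ne_top (hq i)) (le_of_eq ENNReal.toNNReal_one))).toMeasure)
      = ∏ i, ((1 - (q i).toReal) * g i false + (q i).toReal * g i true) := by
  rw [integral_fintype Integrable.of_finite]
  simp_rw [measureReal_def]
  have h1 : ∀ b : Fin m → Bool,
      ((Measure.pi fun i => (PMF.bernoulli (q i).toNNReal (le_trans (ENNReal.toNNReal_mono ENNReal.one_ne_top (hq i)) (le_of_eq ENNReal.toNNReal_one))).toMeasure) {b}).toReal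
          • (∏ i, g i (b i))
        = ∏ i, (g i (b i) * (bif b i then (q i).toReal else 1 - (q i).toReal)) := by
    intro b
    rw [pi_singleton q hq b, ENNReal.toReal_prod, smul_eq_mul, mul_comm, Finset.prod_mul_distrib]
    congr 1
    refine Finset.prod_congr rfl fun i _ => ?_
    cases hb : b i
    · simp [ENNReal.toReal_sub_of_le (hq i) ENNReal.one_ne_top]
    · simp
  simp_rw [h1]
  have key := Finset.prod_univ_sum (fun _ : Fin m => (Finset.univ : Finset Bool))
      (fun i y => g i y * (bif y then (q i).toReal else 1 - (q i).toReal))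
  rw [Fintype.piFinset_univ] at key
  rw [← key]
  refine Finset.prod_congr rfl fun i _ => ?_
  rw [Fintype.sum_bool]
  simp only [Bool.cond_true, Bool.cond_false]
  ring

lemma pb_isProb {ν : Measure ℕ} (hν : IsPoissonBinomial ν) : IsProbabilityMeasure ν := by
  obtain ⟨m, q, hq, rfl⟩ := hν
  unfold poissonBinomial
  exact Measure.isProbabilityMeasure_map (measurable_of_finite _).aemeasurable

lemma card_filter_eq_sum {m : ℕ} (b : Fin m → Bool) :
    ((Finset.univ.filter fun i => b i).card) = ∑ i, (if b i then 1 else 0) := by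
  rw [Finset.card_filter]

lemma pb_mean {m : ℕ} (q : Fin m → ℝ≥0∞) (hq : ∀ i, q i ≤ 1) :
    ∫ y, (y : ℝ) ∂(poissonBinomial q hq) = ∑ i, (q i).toReal := by
  unfold poissonBinomial
  rw [integral_map (measurable_of_finite _).aemeasurable
    (measurable_from_nat (f := fun y : ℕ => (y : ℝ))).aestronglyMeasurable]
  have h1 : ∀ b : Fin m → Bool,
      (((Finset.univ.filter fun i => b i).card : ℕ) : ℝ)
        = ∑ i, (if b i then (1:ℝ) else 0) := by
    intro b
    rw [card_filter_eq_sum b]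
    push_cast
    exact Finset.sum_congr rfl fun i _ => by split <;> simp
  simp_rw [h1]
  rw [integral_finset_sum _ fun i _ => Integrable.of_finite]
  refine Finset.sum_congr rfl fun i _ => ?_
  have h2 : ∀ b : Fin m → Bool, (if b i then (1:ℝ) else 0)
      = ∏ j, (fun (j : Fin m) (y : Bool) =>
          if j = i then (if y = true then (1:ℝ) else 0) else 1) j (b j) := by
    intro b
    rw [Finset.prod_eq_single i (fun j _ hj => by simp [hj]) (by simp)]
    simp
  simp_rw [h2]
  rw [pi_integral_prod q hq (fun j y => if j = i then (if y = true then (1:ℝ) else 0) else 1)]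
  rw [Finset.prod_eq_single i (fun j _ hj => by simp [hj, sub_add_cancel]) (by simp)]
  simp

lemma pb_mgf {ν : Measure ℕ} (hν : IsPoissonBinomial ν) {s : ℝ} (hs : 0 ≤ s) :
    ∫⁻ y, ENNReal.ofReal (Real.exp (s * y)) ∂ν
      ≤ ENNReal.ofReal (Real.exp ((∫ y, (y : ℝ) ∂ν) * (Real.exp s - 1))) := by
  obtain ⟨m, q, hq, rfl⟩ := hν
  rw [pb_mean q hq]
  unfold poissonBinomial
  rw [lintegral_map (by exact measurable_from_nat) (measurable_of_finite _)]
  have h1 : ∀ b : Fin m → Bool,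
      ENNReal.ofReal (Real.exp (s * ((Finset.univ.filter fun i => b i).card : ℕ)))
        = ∏ i, ENNReal.ofReal (Real.exp (s * (if b i then (1:ℝ) else 0))) := by
    intro b
    rw [← ENNReal.ofReal_prod_of_nonneg (fun i _ => (Real.exp_pos _).le), ← Real.exp_sum]
    congr 2
    rw [← Finset.mul_sum]
    congr 1
    rw [card_filter_eq_sum b]
    push_cast
    exact Finset.sum_congr rfl fun i _ => by split <;> simp
  simp_rw [h1]
  rw [pi_lintegral_prod q hq
    (fun i y => ENNReal.ofReal (Real.exp (s * if y = true then (1:ℝ) else 0)))]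
  have h2 : ∀ i : Fin m,
      (1 - q i) * ENNReal.ofReal (Real.exp (s * if false = true then (1:ℝ) else 0))
        + q i * ENNReal.ofReal (Real.exp (s * if true = true then (1:ℝ) else 0))
      ≤ ENNReal.ofReal (Real.exp ((q i).toReal * (Real.exp s - 1))) := by
    intro i
    have hqt : q i = ENNReal.ofReal (q i).toReal :=
      (ENNReal.ofReal_toReal (lt_of_le_of_lt (hq i) ENNReal.one_lt_top).ne).symm
    have hp0 : (0:ℝ) ≤ (q i).toReal := ENNReal.toReal_nonneg
    have hp1 : (q i).toReal ≤ 1 := by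
      simpa using ENNReal.toReal_mono ENNReal.one_ne_top (hq i)
    have h1q : (1:ℝ≥0∞) - q i = ENNReal.ofReal (1 - (q i).toReal) := by
      rw [ENNReal.ofReal_sub _ ENNReal.toReal_nonneg, ENNReal.ofReal_one, ← hqt]
    have hif1 : (s * if true = true then (1:ℝ) else 0) = s := by simp
    have hif0 : (s * if false = true then (1:ℝ) else 0) = 0 := by simp
    rw [hif1, hif0, Real.exp_zero, ENNReal.ofReal_one, mul_one]
    calc (1 - q i) + q i * ENNReal.ofReal (Real.exp s)
        = ENNReal.ofReal (1 - (q i).toReal) + ENNReal.ofReal ((q i).toReal * Real.exp s) := by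
          rw [h1q]; nth_rewrite 2 [hqt]; rw [← ENNReal.ofReal_mul hp0]
      _ = ENNReal.ofReal (1 - (q i).toReal + (q i).toReal * Real.exp s) :=
          (ENNReal.ofReal_add (by linarith) (by positivity)).symm
      _ ≤ ENNReal.ofReal (Real.exp ((q i).toReal * (Real.exp s - 1))) := by
          apply ENNReal.ofReal_le_ofReal
          have := Real.add_one_le_exp ((q i).toReal * (Real.exp s - 1))
          linarith
  calc ∏ i, ((1 - q i) * ENNReal.ofReal (Real.exp (s * if false = true then (1:ℝ) else 0))
        + q i * ENNReal.ofReal (Real.exp (s * if true = true then (1:ℝ) else 0)))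
      ≤ ∏ i, ENNReal.ofReal (Real.exp ((q i).toReal * (Real.exp s - 1))) :=
        Finset.prod_le_prod' fun i _ => h2 i
    _ = ENNReal.ofReal (Real.exp ((∑ i, (q i).toReal) * (Real.exp s - 1))) := by
        rw [← ENNReal.ofReal_prod_of_nonneg (fun i _ => (Real.exp_pos _).le), ← Real.exp_sum,
          Finset.sum_mul]

/-! ### History partition -/

variable {Ω : Type} [MeasurableSpace Ω] {μ : Measure Ω} {X : ℕ → Ω → ℕ}

def exth (i : ℕ) (h : Fin i → ℕ) : ℕ → ℕ := fun j => if hj : j < i then h ⟨j, hj⟩ else 0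

def Aset (X : ℕ → Ω → ℕ) (i : ℕ) (h : Fin i → ℕ) : Set Ω :=
  {ω | ∀ j < i, X j ω = exth i h j}

omit [MeasurableSpace Ω] in
lemma mem_Aset_iff {i : ℕ} {h : Fin i → ℕ} {ω : Ω} :
    ω ∈ Aset X i h ↔ ∀ j : Fin i, X j ω = h j := by
  constructor
  · intro H j
    have := H j j.2
    rwa [exth, dif_pos j.2] at this
  · intro H j hj
    rw [exth]
    simp only [dif_pos hj]
    exact H ⟨j, hj⟩

lemma Aset_meas (hX : ∀ i, Measurable (X i)) (i : ℕ) (h : Fin i → ℕ) :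
    MeasurableSet (Aset X i h) := by
  have : Aset X i h = ⋂ j ∈ Set.Iio i, (X j) ⁻¹' {exth i h j} := by
    ext ω; simp [Aset]
  rw [this]
  exact MeasurableSet.biInter (Set.to_countable _)
    fun j _ => (hX j) (measurableSet_singleton _)

omit [MeasurableSpace Ω] in
lemma Aset_disjoint (i : ℕ) :
    Pairwise (Function.onFun Disjoint (Aset X i)) := by
  intro h1 h2 hne
  rw [Function.onFun, Set.disjoint_left]
  intro ω hω1 hω2
  apply hne
  funext j
  rw [← mem_Aset_iff.1 hω1 j, ← mem_Aset_iff.1 hω2 j]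

omit [MeasurableSpace Ω] in
lemma Aset_cover (i : ℕ) : (⋃ h : Fin i → ℕ, Aset X i h) = Set.univ := by
  ext ω
  simp only [Set.mem_iUnion, Set.mem_univ, iff_true]
  exact ⟨fun j => X j ω, mem_Aset_iff.2 fun j => rfl⟩

lemma lintegral_partition (hX : ∀ i, Measurable (X i)) (i : ℕ) (f : Ω → ℝ≥0∞) :
    ∫⁻ ω, f ω ∂μ = ∑' h : Fin i → ℕ, ∫⁻ ω in Aset X i h, f ω ∂μ := by
  conv_lhs => rw [← setLIntegral_univ (μ := μ) f, ← Aset_cover (X := X) i]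
  exact lintegral_iUnion (Aset_meas hX i) (Aset_disjoint i) f

lemma measure_partition (hX : ∀ i, Measurable (X i)) (i : ℕ) {s : Set Ω}
    (hs : MeasurableSet s) :
    μ s = ∑' h : Fin i → ℕ, μ (Aset X i h ∩ s) := by
  have : s = ⋃ h : Fin i → ℕ, (Aset X i h ∩ s) := by
    rw [← Set.iUnion_inter, Aset_cover, Set.univ_inter]
  conv_lhs => rw [this]
  exact measure_iUnion
    (fun h1 h2 hne => Set.disjoint_of_subset Set.inter_subset_left Set.inter_subset_left
      (Aset_disjoint i hne))
    (fun h => (Aset_meas hX i h).inter hs)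

lemma cond_map_single [IsProbabilityMeasure μ] (hX : ∀ i, Measurable (X i)) {i : ℕ}
    (hi : 0 < i) (ν : ℕ → Measure ℕ)
    (Hν : ∀ hist : ℕ → ℕ, μ {ω | ∀ j < i, X j ω = hist j} ≠ 0 →
      (μ[|{ω | ∀ j < i, X j ω = hist j}]).map (X i) = ν (hist (i - 1)))
    (x : ℕ) (hx : μ {ω | X (i - 1) ω = x} ≠ 0) :
    (μ[|{ω | X (i - 1) ω = x}]).map (X i) = ν x := by
  set B : Set Ω := {ω | X (i - 1) ω = x} with hB
  have hBmeas : MeasurableSet B := (hX (i - 1)) (measurableSet_singleton x)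
  have hAB : ∀ h : Fin i → ℕ, exth i h (i - 1) = x → Aset X i h ⊆ B := by
    intro h hh ω hω
    have := hω (i - 1) (Nat.sub_lt hi Nat.one_pos)
    rw [hh] at this
    exact this
  have hAB' : ∀ h : Fin i → ℕ, exth i h (i - 1) ≠ x → Aset X i h ∩ B = ∅ := by
    intro h hh
    ext ω
    simp only [Set.mem_inter_iff, Set.mem_empty_iff_false, iff_false]
    rintro ⟨hω1, hω2⟩
    exact hh ((hω1 (i - 1) (Nat.sub_lt hi Nat.one_pos)).symm.trans hω2)
  have key : ∀ (u : Set ℕ), MeasurableSet u →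
      μ (B ∩ X i ⁻¹' u) = μ B * ν x u := by
    intro u hu
    have hterm : ∀ h : Fin i → ℕ,
        μ (Aset X i h ∩ (B ∩ X i ⁻¹' u)) = μ (Aset X i h ∩ B) * ν x u := by
      intro h
      by_cases hh : exth i h (i - 1) = x
      · have h1 : Aset X i h ∩ B = Aset X i h := Set.inter_eq_left.2 (hAB h hh)
        have h2 : Aset X i h ∩ (B ∩ X i ⁻¹' u) = Aset X i h ∩ X i ⁻¹' u := by
          rw [← Set.inter_assoc, h1]
        rw [h1, h2]
        by_cases hA0 : μ (Aset X i h) = 0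
        · rw [measure_inter_null_of_null_left _ hA0, hA0, zero_mul]
        · have hmap := Hν (exth i h) hA0
          rw [hh] at hmap
          have := congrArg (fun ρ : Measure ℕ => ρ u) hmap
          rw [Measure.map_apply (hX i) hu] at this
          rw [cond_apply (show MeasurableSet {ω | ∀ j < i, X j ω = exth i h j} from
            Aset_meas hX i h) μ] at this
          rw [show {ω : Ω | ∀ j < i, X j ω = exth i h j} = Aset X i h from rfl] at this
          rw [← this, ← mul_assoc, ENNReal.mul_inv_cancel hA0 (measure_ne_top μ _), one_mul]
      · rw [← Set.inter_assoc, hAB' h hh, Set.empty_inter]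
        simp
    calc μ (B ∩ X i ⁻¹' u)
        = ∑' h : Fin i → ℕ, μ (Aset X i h ∩ (B ∩ X i ⁻¹' u)) :=
          measure_partition hX i (hBmeas.inter ((hX i) hu))
      _ = ∑' h : Fin i → ℕ, μ (Aset X i h ∩ B) * ν x u := tsum_congr hterm
      _ = (∑' h : Fin i → ℕ, μ (Aset X i h ∩ B)) * ν x u := ENNReal.tsum_mul_right
      _ = μ B * ν x u := by rw [← measure_partition hX i hBmeas]
  ext u hu
  rw [Measure.map_apply (hX i) hu, cond_apply hBmeas μ, key u hu, ← mul_assoc,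
    ENNReal.inv_mul_cancel hx (measure_ne_top μ B), one_mul]

/-! ### Constants -/

lemma exp_sub_one_le {κ x₀ y : ℝ} (hκ : κ = Real.exp x₀) (h0 : 0 ≤ y) (h1 : y ≤ x₀) :
    Real.exp y - 1 ≤ κ * y := by
  have h2 : Real.exp (-y) * Real.exp y = 1 := by rw [← Real.exp_add]; simp
  have h3 : 1 - y ≤ Real.exp (-y) := by linarith [Real.add_one_le_exp (-y)]
  have h4 : Real.exp y - 1 ≤ y * Real.exp y := by nlinarith [Real.exp_pos y]
  have h5 : Real.exp y ≤ Real.exp x₀ := Real.exp_le_exp.2 h1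
  subst hκ
  nlinarith [Real.exp_pos y]

lemma const_pack (φ ψ : ℝ) (hφ : 0 < φ) (hψ : 0 < ψ) (hp : φ * ψ < 1) :
    ∃ t x₀ κ E O : ℝ, 0 < t ∧ 0 < x₀ ∧ 0 < κ ∧
      (∀ y : ℝ, 0 ≤ y → y ≤ x₀ → Real.exp y - 1 ≤ κ * y) ∧
      t ≤ E ∧ t ≤ O ∧ E ≤ x₀ ∧ O ≤ x₀ ∧
      t + φ * (κ * O) ≤ E ∧ t + ψ * (κ * E) ≤ O := by
  obtain ⟨p, hpdef⟩ : ∃ p, p = φ * ψ := ⟨_, rfl⟩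
  have hp0 : 0 < p := hpdef ▸ mul_pos hφ hψ
  have hp1 : p < 1 := hpdef ▸ hp
  obtain ⟨a, hadef⟩ : ∃ a : ℝ, a = (1 + p) / (2 * p) := ⟨_, rfl⟩
  have ha1 : 1 < a := by rw [hadef, lt_div_iff₀ (by linarith)]; linarith
  obtain ⟨x₀, hx₀def⟩ : ∃ x₀ : ℝ, x₀ = Real.log a / 2 := ⟨_, rfl⟩
  have hx₀ : 0 < x₀ := by
    have := Real.log_pos ha1
    rw [hx₀def]; positivity
  obtain ⟨κ, hκdef⟩ : ∃ κ, κ = Real.exp x₀ := ⟨_, rfl⟩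
  have hκ0 : 0 < κ := hκdef ▸ Real.exp_pos _
  have hκ1 : 1 ≤ κ := hκdef ▸ Real.one_le_exp hx₀.le
  have hκ2 : κ * κ * p = (1 + p) / 2 := by
    have h : κ * κ = a := by
      rw [hκdef, ← Real.exp_add, show x₀ + x₀ = Real.log a by rw [hx₀def]; ring,
        Real.exp_log (by linarith)]
    rw [h, hadef]
    field_simp
  obtain ⟨cE, hcEdef⟩ : ∃ cE : ℝ, cE = 2 * (1 + κ * φ) / (1 - p) := ⟨_, rfl⟩
  have hcE0 : 0 < cE := by
    rw [hcEdef]; apply div_pos (by nlinarith) (by linarith)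
  obtain ⟨t, htdef⟩ : ∃ t : ℝ, t = x₀ / (1 + (1 + κ * ψ) * cE) := ⟨_, rfl⟩
  have hden : 0 < 1 + (1 + κ * ψ) * cE := by nlinarith [mul_pos (mul_pos hκ0 hψ) hcE0]
  have ht : 0 < t := htdef ▸ div_pos hx₀ hden
  obtain ⟨E, hEdef⟩ : ∃ E : ℝ, E = t * cE := ⟨_, rfl⟩
  obtain ⟨O, hOdef⟩ : ∃ O : ℝ, O = t + κ * ψ * E := ⟨_, rfl⟩
  have hE0 : 0 < E := hEdef ▸ mul_pos ht hcE0
  have hcE1 : 1 ≤ cE := by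
    rw [hcEdef, le_div_iff₀ (by linarith)]
    nlinarith
  have htE : t ≤ E := by rw [hEdef]; nlinarith
  have htO : t ≤ O := by rw [hOdef]; nlinarith [mul_pos (mul_pos hκ0 hψ) hE0]
  have hEx : E ≤ x₀ := by
    rw [hEdef, htdef, div_mul_eq_mul_div, div_le_iff₀ hden]
    nlinarith [mul_pos hx₀ (mul_pos (mul_pos hκ0 hψ) hcE0), mul_pos hx₀ hcE0]
  have hOx : O ≤ x₀ := by
    have h : O = t * (1 + κ * ψ * cE) := by rw [hOdef, hEdef]; ring
    rw [h, htdef, div_mul_eq_mul_div, div_le_iff₀ hden]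
    nlinarith [mul_pos hx₀ (mul_pos (mul_pos hκ0 hψ) hcE0), mul_pos hx₀ hcE0]
  have h1 : cE * (1 - p) = 2 * (1 + κ * φ) := by
    rw [hcEdef, div_mul_cancel₀]
    linarith
  have hkey : t + φ * (κ * O) = E := by
    have h2 : t + φ * (κ * O) = t * (1 + κ * φ) + (κ * κ * p) * E := by
      rw [hOdef, hEdef, hpdef]; ring
    rw [h2, hκ2, hEdef]
    linear_combination (-(t / 2)) * h1
  exact ⟨t, x₀, κ, E, O, ht, hx₀, hκ0,
    fun y h0 h1 => exp_sub_one_le hκdef h0 h1,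
    htE, htO, hEx, hOx, le_of_eq hkey, le_of_eq (by rw [hOdef]; ring)⟩

end Stmt7Aux

set_option maxHeartbeats 1000000 in
/-- Markov chain aggregation: if `{X_i}` is a Markov chain on `ℕ` such that,
given the history, each `X_i` is distributed as a sum of Poisson trials depending only on
`X_{i-1}`, with conditional drift `E[X_{2i+1} | X_{2i}] ≤ φ·X_{2i}` and
`E[X_{2i} | X_{2i-1}] ≤ ψ·X_{2i-1}` where `φψ < 1`, then there are constants
`C_{φψ} > 1` and `K` (depending only on `φ, ψ` and the constant `K₀` in `X_0 = O(r)`) such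
that for every `r > C_{φψ}` with `X_0 ≤ K₀·r`,
`Σ_{i=0}^r X_i ≤ K·r·log r` with probability at least `1 − 2·exp(−3r)`. -/
theorem stmt7 (φ ψ : ℝ) (hφ : 0 < φ) (hψ : 0 < ψ) (hφψ : φ * ψ < 1)
    (K₀ : ℝ) (hK₀ : 0 < K₀) :
    ∃ (Cφψ K : ℝ), 1 < Cφψ ∧ 0 < K ∧
    ∀ (r : ℕ), Cφψ < (r : ℝ) →
    ∀ (Ω : Type) (_ : MeasurableSpace Ω) (μ : Measure Ω), IsProbabilityMeasure μ →
    ∀ (X : ℕ → Ω → ℕ), (∀ i, Measurable (X i)) →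
      (∀ i : ℕ, 0 < i →
        ∃ ν : ℕ → Measure ℕ, (∀ x, IsPoissonBinomial (ν x)) ∧
          ∀ hist : ℕ → ℕ,
            μ {ω | ∀ j < i, X j ω = hist j} ≠ 0 →
            (μ[|{ω | ∀ j < i, X j ω = hist j}]).map (X i) = ν (hist (i - 1))) →
      (∀ i x : ℕ, μ {ω | X (2 * i) ω = x} ≠ 0 →
        ∫ ω, (X (2 * i + 1) ω : ℝ) ∂(μ[|{ω | X (2 * i) ω = x}]) ≤ φ * x) →
      (∀ i x : ℕ, 0 < i → μ {ω | X (2 * i - 1) ω = x} ≠ 0 →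
        ∫ ω, (X (2 * i) ω : ℝ) ∂(μ[|{ω | X (2 * i - 1) ω = x}]) ≤ ψ * x) →
      (∀ ω, (X 0 ω : ℝ) ≤ K₀ * r) →
      ENNReal.ofReal (1 - 2 * Real.exp (-3 * r)) ≤
        μ {ω | (∑ i ∈ Finset.range (r + 1), (X i ω : ℝ)) ≤ K * r * Real.log r} := by
  obtain ⟨t, x₀, κ, E, O, ht, hx₀, hκ0, hκlin, htE, htO, hEx, hOx, hstepE, hstepO⟩ :=
    Stmt7Aux.const_pack φ ψ hφ hψ hφψ
  refine ⟨3, (x₀ * K₀ + 4) / t, by norm_num, div_pos (by nlinarith) ht, ?_⟩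
  intro r hr Ω mΩ μ hμ X hX hPB hodd heven hX0
  have hr3 : (3:ℕ) < r := by exact_mod_cast hr
  have hr4 : 4 ≤ r := by omega
  have hrR : (0:ℝ) ≤ (r:ℕ) := by positivity
  have hlogr : 1 ≤ Real.log r := by
    have h4 : (4:ℝ) ≤ (r:ℕ) := by exact_mod_cast hr4
    have he : Real.exp 1 ≤ 4 := by
      have := Real.exp_one_lt_d9; linarith
    calc (1:ℝ) = Real.log (Real.exp 1) := (Real.log_exp 1).symm
      _ ≤ Real.log r := Real.log_le_log (Real.exp_pos 1) (he.trans h4)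
  -- the alternating constants
  obtain ⟨c, hcdef⟩ : ∃ c : ℕ → ℝ, c = fun n => if n % 2 = 1 then φ else ψ := ⟨_, rfl⟩
  have hcφ : ∀ n, n % 2 = 1 → c n = φ := by intro n hn; rw [hcdef]; simp [hn]
  have hcψ : ∀ n, n % 2 = 0 → c n = ψ := by intro n hn; rw [hcdef]; simp [hn]
  have hcpos : ∀ n, 0 < c n := by
    intro n; rw [hcdef]; dsimp only; split
    · exact hφ
    · exact hψ
  -- the weights
  obtain ⟨w, hw0, hwsucc⟩ : ∃ w : ℕ → ℝ, w 0 = t ∧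
      ∀ k, w (k+1) = t + c (r - k) * (Real.exp (w k) - 1) :=
    ⟨fun k => Nat.rec t (fun k wk => t + c (r - k) * (Real.exp wk - 1)) k, rfl, fun _ => rfl⟩
  have hwinv : ∀ k, k ≤ r → t ≤ w k ∧ w k ≤ x₀ ∧
      ((r - k) % 2 = 0 → w k ≤ E) ∧ ((r - k) % 2 = 1 → w k ≤ O) := by
    intro k
    induction k with
    | zero =>
      intro _
      rw [hw0]
      exact ⟨le_refl t, le_trans htE hEx, fun _ => htE, fun _ => htO⟩
    | succ k ih =>
      intro hk
      obtain ⟨h1, h2, h3, h4⟩ := ih (by omega)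
      have hw0k : 0 ≤ w k := le_trans ht.le h1
      have hexp0 : 0 ≤ Real.exp (w k) - 1 := by
        have := Real.one_le_exp hw0k
        linarith
      have hlin := hκlin (w k) hw0k h2
      rw [hwsucc k]
      have hge : t ≤ t + c (r - k) * (Real.exp (w k) - 1) := by
        nlinarith [mul_nonneg (hcpos (r - k)).le hexp0]
      by_cases hpar : (r - (k+1)) % 2 = 0
      · have hrk : (r - k) % 2 = 1 := by omega
        have hc1 : c (r - k) = φ := hcφ _ hrk
        have hwkO : w k ≤ O := h4 hrk
        have hb : t + c (r - k) * (Real.exp (w k) - 1) ≤ E := by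
          rw [hc1]
          have l1 : Real.exp (w k) - 1 ≤ κ * O := le_trans hlin (by nlinarith)
          nlinarith
        exact ⟨hge, le_trans hb hEx, fun _ => hb, fun hcon => by omega⟩
      · have hrk : (r - k) % 2 = 0 := by omega
        have hc1 : c (r - k) = ψ := hcψ _ hrk
        have hwkE : w k ≤ E := h3 hrk
        have hb : t + c (r - k) * (Real.exp (w k) - 1) ≤ O := by
          rw [hc1]
          have l1 : Real.exp (w k) - 1 ≤ κ * E := le_trans hlin (by nlinarith)
          nlinarith
        exact ⟨hge, le_trans hb hOx, fun hcon => by omega, fun _ => hb⟩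
  -- the exponential functional
  obtain ⟨L, hLdef⟩ : ∃ L : ℕ → ℝ≥0∞, L = fun i => ∫⁻ ω,
      ENNReal.ofReal (Real.exp (∑ j ∈ Finset.range i, t * (X j ω : ℝ)
        + w (r - i) * (X i ω : ℝ))) ∂μ := ⟨_, rfl⟩
  have hmeasR : ∀ j, Measurable fun ω => (X j ω : ℝ) :=
    fun j => (measurable_from_nat (f := fun n : ℕ => (n : ℝ))).comp (hX j)
  have hmeasI : ∀ i, Measurable fun ω =>
      ENNReal.ofReal (Real.exp (∑ j ∈ Finset.range i, t * (X j ω : ℝ)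
        + w (r - i) * (X i ω : ℝ))) := by
    intro i
    apply ENNReal.measurable_ofReal.comp
    apply Real.measurable_exp.comp
    apply Measurable.add
    · exact Finset.measurable_sum _ fun j _ => (measurable_const.mul (hmeasR j))
    · exact measurable_const.mul (hmeasR i)
  -- one-step inequality
  have hLstep : ∀ i, i + 1 ≤ r → L (i + 1) ≤ L i := by
    intro i hir
    obtain ⟨ν, hνPB, hνmap⟩ := hPB (i + 1) (Nat.succ_pos i)
    have hmean : ∀ x : ℕ, μ {ω | X i ω = x} ≠ 0 → ∫ y, (y : ℝ) ∂(ν x) ≤ c (i + 1) * x := by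
      intro x hx
      have hcm : (μ[|{ω | X i ω = x}]).map (X (i + 1)) = ν x := by
        have := Stmt7Aux.cond_map_single (μ := μ) hX (Nat.succ_pos i) ν hνmap x hx
        simpa using this
      have hint : ∫ y, (y : ℝ) ∂(ν x) = ∫ ω, (X (i + 1) ω : ℝ) ∂(μ[|{ω | X i ω = x}]) := by
        rw [← hcm, integral_map (hX (i + 1)).aemeasurable
          (measurable_from_nat (f := fun n : ℕ => (n : ℝ))).aestronglyMeasurable]
      rw [hint]
      by_cases hpar : i % 2 = 0
      · have h2m : 2 * (i / 2) = i := by omega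
        have hφx := hodd (i / 2) x (by rw [h2m]; exact hx)
        rw [h2m] at hφx
        rw [hcφ (i+1) (by omega)]
        exact hφx
      · have h2m : 2 * ((i + 1) / 2) = i + 1 := by omega
        have hψx := heven ((i + 1) / 2) x (by omega)
          (by rw [h2m]; simpa using hx)
        rw [h2m] at hψx
        simp only [Nat.add_sub_cancel] at hψx
        rw [hcψ (i+1) (by omega)]
        exact hψx
    -- per-history bound
    have key : ∀ h : Fin (i+1) → ℕ,
        ∫⁻ ω in Stmt7Aux.Aset X (i+1) h,
          ENNReal.ofReal (Real.exp (∑ j ∈ Finset.range (i+1), t * (X j ω : ℝ)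
            + w (r - (i+1)) * (X (i+1) ω : ℝ))) ∂μ
        ≤ ∫⁻ ω in Stmt7Aux.Aset X (i+1) h,
          ENNReal.ofReal (Real.exp (∑ j ∈ Finset.range i, t * (X j ω : ℝ)
            + w (r - i) * (X i ω : ℝ))) ∂μ := by
      intro h
      have hAmeas : MeasurableSet (Stmt7Aux.Aset X (i+1) h) := Stmt7Aux.Aset_meas hX (i+1) h
      by_cases hA0 : μ (Stmt7Aux.Aset X (i+1) h) = 0
      · rw [Measure.restrict_eq_zero.2 hA0]
        simp
      have hXj : ∀ ω ∈ Stmt7Aux.Aset X (i+1) h, ∀ j, j < i + 1 →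
          X j ω = Stmt7Aux.exth (i+1) h j := fun ω hω j hj => hω j hj
      have hu0 : 0 ≤ w (r - (i+1)) := le_trans ht.le (hwinv (r - (i+1)) (by omega)).1
      have hux : w (r - (i+1)) ≤ x₀ := (hwinv (r - (i+1)) (by omega)).2.1
      have hwrec : w (r - i) = t + c (i + 1) * (Real.exp (w (r - (i+1))) - 1) := by
        have hs := hwsucc (r - (i+1))
        rw [show r - (i+1) + 1 = r - i from by omega,
          show r - (r - (i+1)) = i + 1 from by omega] at hs
        exact hs
      -- LHS as constant times conditional integral
      have hLHS : ∫⁻ ω in Stmt7Aux.Aset X (i+1) h,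
          ENNReal.ofReal (Real.exp (∑ j ∈ Finset.range (i+1), t * (X j ω : ℝ)
            + w (r - (i+1)) * (X (i+1) ω : ℝ))) ∂μ
          = ENNReal.ofReal (Real.exp (∑ j ∈ Finset.range (i+1),
              t * (Stmt7Aux.exth (i+1) h j : ℝ)))
            * ∫⁻ ω in Stmt7Aux.Aset X (i+1) h,
                ENNReal.ofReal (Real.exp (w (r - (i+1)) * (X (i+1) ω : ℝ))) ∂μ := by
        rw [← lintegral_const_mul _ (by
          exact ENNReal.measurable_ofReal.comp (Real.measurable_exp.comp
            (measurable_const.mul (hmeasR (i+1)))))]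
        apply setLIntegral_congr_fun hAmeas
        intro ω hω
        beta_reduce
        have hsum : ∑ j ∈ Finset.range (i+1), t * (X j ω : ℝ)
            = ∑ j ∈ Finset.range (i+1), t * (Stmt7Aux.exth (i+1) h j : ℝ) :=
          Finset.sum_congr rfl fun j hj => by rw [hXj ω hω j (Finset.mem_range.1 hj)]
        rw [hsum, ← ENNReal.ofReal_mul (Real.exp_pos _).le, ← Real.exp_add]
      -- conditional integral equals integral against ν
      have hcondint : ∫⁻ ω in Stmt7Aux.Aset X (i+1) h,
            ENNReal.ofReal (Real.exp (w (r - (i+1)) * (X (i+1) ω : ℝ))) ∂μ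
          = μ (Stmt7Aux.Aset X (i+1) h)
            * ∫⁻ y, ENNReal.ofReal (Real.exp (w (r - (i+1)) * (y : ℝ)))
                ∂(ν (Stmt7Aux.exth (i+1) h i)) := by
        have hmapA := hνmap (Stmt7Aux.exth (i+1) h) hA0
        simp only [Nat.add_sub_cancel] at hmapA
        have e1 : ∫⁻ ω in Stmt7Aux.Aset X (i+1) h,
              ENNReal.ofReal (Real.exp (w (r - (i+1)) * (X (i+1) ω : ℝ))) ∂μ
            = μ (Stmt7Aux.Aset X (i+1) h) * ∫⁻ ω,
                ENNReal.ofReal (Real.exp (w (r - (i+1)) * (X (i+1) ω : ℝ)))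
                ∂(μ[|Stmt7Aux.Aset X (i+1) h]) := by
          rw [ProbabilityTheory.cond, lintegral_smul_measure, smul_eq_mul, ← mul_assoc,
            ENNReal.mul_inv_cancel hA0 (measure_ne_top μ _), one_mul]
        rw [e1, ← hmapA, lintegral_map (by exact measurable_from_nat) (hX (i+1))]
        rfl
      -- mgf bound
      have hμx : μ {ω | X i ω = (Stmt7Aux.exth (i+1) h i : ℕ)} ≠ 0 := by
        intro h0
        exact hA0 (measure_mono_null (fun ω hω => hω i (by omega)) h0)
      have hmgf := Stmt7Aux.pb_mgf (hνPB (Stmt7Aux.exth (i+1) h i)) hu0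
      have hM := hmean (Stmt7Aux.exth (i+1) h i) hμx
      have hνbound : ∫⁻ y, ENNReal.ofReal (Real.exp (w (r - (i+1)) * (y : ℝ)))
            ∂(ν (Stmt7Aux.exth (i+1) h i))
          ≤ ENNReal.ofReal (Real.exp ((c (i+1) * (Stmt7Aux.exth (i+1) h i : ℝ))
              * (Real.exp (w (r - (i+1))) - 1))) := by
        refine le_trans hmgf ?_
        apply ENNReal.ofReal_le_ofReal
        apply Real.exp_le_exp.2
        apply mul_le_mul_of_nonneg_right hM
        have := Real.one_le_exp hu0
        linarith
      -- assemble
      rw [hLHS]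
      calc ENNReal.ofReal (Real.exp (∑ j ∈ Finset.range (i+1),
              t * (Stmt7Aux.exth (i+1) h j : ℝ)))
            * ∫⁻ ω in Stmt7Aux.Aset X (i+1) h,
                ENNReal.ofReal (Real.exp (w (r - (i+1)) * (X (i+1) ω : ℝ))) ∂μ
          ≤ ENNReal.ofReal (Real.exp (∑ j ∈ Finset.range (i+1),
              t * (Stmt7Aux.exth (i+1) h j : ℝ)))
            * (μ (Stmt7Aux.Aset X (i+1) h)
              * ENNReal.ofReal (Real.exp ((c (i+1) * (Stmt7Aux.exth (i+1) h i : ℝ))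
                  * (Real.exp (w (r - (i+1))) - 1)))) := by
            rw [hcondint]
            exact mul_le_mul_right (mul_le_mul_right hνbound _) _
        _ = μ (Stmt7Aux.Aset X (i+1) h)
            * ENNReal.ofReal (Real.exp (∑ j ∈ Finset.range i,
                t * (Stmt7Aux.exth (i+1) h j : ℝ)
                + w (r - i) * (Stmt7Aux.exth (i+1) h i : ℝ))) := by
            rw [← mul_assoc, mul_comm (ENNReal.ofReal _) (μ _), mul_assoc,
              ← ENNReal.ofReal_mul (Real.exp_pos _).le, ← Real.exp_add]
            congr 3
            rw [Finset.sum_range_succ, hwrec]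
            ring
        _ = ∫⁻ _ω in Stmt7Aux.Aset X (i+1) h,
              ENNReal.ofReal (Real.exp (∑ j ∈ Finset.range i,
                t * (Stmt7Aux.exth (i+1) h j : ℝ)
                + w (r - i) * (Stmt7Aux.exth (i+1) h i : ℝ))) ∂μ := by
            rw [setLIntegral_const, mul_comm]
        _ = ∫⁻ ω in Stmt7Aux.Aset X (i+1) h,
              ENNReal.ofReal (Real.exp (∑ j ∈ Finset.range i, t * (X j ω : ℝ)
                + w (r - i) * (X i ω : ℝ))) ∂μ := by
            apply setLIntegral_congr_fun hAmeas
            intro ω hω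
            beta_reduce
            have hXi : ((X i ω : ℕ) : ℝ) = (Stmt7Aux.exth (i+1) h i : ℝ) := by
              rw [hXj ω hω i (by omega)]
            have hsum : ∑ j ∈ Finset.range i, t * (Stmt7Aux.exth (i+1) h j : ℝ)
                = ∑ j ∈ Finset.range i, t * (X j ω : ℝ) :=
              Finset.sum_congr rfl fun j hj => by
                rw [hXj ω hω j (by have := Finset.mem_range.1 hj; omega)]
            rw [hsum, hXi]
    -- partition and sum
    rw [hLdef]
    calc (fun i => ∫⁻ ω, ENNReal.ofReal (Real.exp (∑ j ∈ Finset.range i, t * (X j ω : ℝ)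
            + w (r - i) * (X i ω : ℝ))) ∂μ) (i+1)
        = ∑' h : Fin (i+1) → ℕ, ∫⁻ ω in Stmt7Aux.Aset X (i+1) h,
            ENNReal.ofReal (Real.exp (∑ j ∈ Finset.range (i+1), t * (X j ω : ℝ)
              + w (r - (i+1)) * (X (i+1) ω : ℝ))) ∂μ :=
          Stmt7Aux.lintegral_partition hX (i+1) _
      _ ≤ ∑' h : Fin (i+1) → ℕ, ∫⁻ ω in Stmt7Aux.Aset X (i+1) h,
            ENNReal.ofReal (Real.exp (∑ j ∈ Finset.range i, t * (X j ω : ℝ)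
              + w (r - i) * (X i ω : ℝ))) ∂μ := ENNReal.tsum_le_tsum key
      _ = ∫⁻ ω, ENNReal.ofReal (Real.exp (∑ j ∈ Finset.range i, t * (X j ω : ℝ)
            + w (r - i) * (X i ω : ℝ))) ∂μ :=
          (Stmt7Aux.lintegral_partition hX (i+1) _).symm
  -- chain down to L 0
  have hchain : ∀ i, i ≤ r → L i ≤ L 0 := by
    intro i
    induction i with
    | zero => intro _; exact le_refl _
    | succ i ih => intro hir; exact le_trans (hLstep i hir) (ih (by omega))
  -- bound L 0
  have hL0 : L 0 ≤ ENNReal.ofReal (Real.exp (x₀ * (K₀ * r))) := by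
    rw [hLdef]
    calc ∫⁻ ω, ENNReal.ofReal (Real.exp (∑ j ∈ Finset.range 0, t * (X j ω : ℝ)
            + w (r - 0) * (X 0 ω : ℝ))) ∂μ
        ≤ ∫⁻ _ω, ENNReal.ofReal (Real.exp (x₀ * (K₀ * r))) ∂μ := by
          apply lintegral_mono
          intro ω
          apply ENNReal.ofReal_le_ofReal
          apply Real.exp_le_exp.2
          rw [Finset.sum_range_zero, zero_add]
          have hwr : w (r - 0) ≤ x₀ := by
            simpa using (hwinv r le_rfl).2.1
          have hX0ω : (X 0 ω : ℝ) ≤ K₀ * r := hX0 ω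
          have hX0nn : (0:ℝ) ≤ (X 0 ω : ℝ) := Nat.cast_nonneg _
          have hwr0 : 0 ≤ w (r - 0) := by
            simpa using le_trans ht.le (hwinv r le_rfl).1
          calc w (r - 0) * (X 0 ω : ℝ) ≤ x₀ * (X 0 ω : ℝ) :=
                mul_le_mul_of_nonneg_right hwr hX0nn
            _ ≤ x₀ * (K₀ * r) := mul_le_mul_of_nonneg_left hX0ω hx₀.le
      _ = ENNReal.ofReal (Real.exp (x₀ * (K₀ * r))) := by
          rw [lintegral_const, measure_univ, mul_one]
  -- identify L r
  have hLr : L r = ∫⁻ ω, ENNReal.ofReal (Real.exp (∑ j ∈ Finset.range (r+1),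
      t * (X j ω : ℝ))) ∂μ := by
    rw [hLdef]
    apply lintegral_congr
    intro ω
    congr 2
    rw [Finset.sum_range_succ, Nat.sub_self, hw0]
  -- Chernoff bound
  have htT : t * ((x₀ * K₀ + 4) / t * r * Real.log r)
      = (x₀ * K₀ + 4) * (r * Real.log r) := by
    field_simp
  have harith : x₀ * (K₀ * r) ≤ t * ((x₀ * K₀ + 4) / t * r * Real.log r) - 4 * r := by
    rw [htT]
    have h1 : (x₀ * K₀ + 4) * r ≤ (x₀ * K₀ + 4) * (r * Real.log r) := by
      nlinarith [mul_nonneg (mul_nonneg (by nlinarith : (0:ℝ) ≤ x₀ * K₀ + 4) hrR)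
        (sub_nonneg.2 hlogr)]
    nlinarith [h1]
  have hGcmeas : MeasurableSet {ω | (x₀ * K₀ + 4) / t * r * Real.log r
      < ∑ j ∈ Finset.range (r+1), (X j ω : ℝ)} :=
    measurableSet_lt measurable_const (Finset.measurable_sum _ fun j _ => hmeasR j)
  have hbound : μ {ω | (x₀ * K₀ + 4) / t * r * Real.log r
      < ∑ j ∈ Finset.range (r+1), (X j ω : ℝ)} ≤ ENNReal.ofReal (Real.exp (-(4:ℝ) * r)) := by
    have h1 : ENNReal.ofReal (Real.exp (t * ((x₀ * K₀ + 4) / t * r * Real.log r)))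
        * μ {ω | (x₀ * K₀ + 4) / t * r * Real.log r
            < ∑ j ∈ Finset.range (r+1), (X j ω : ℝ)}
        ≤ ENNReal.ofReal (Real.exp (x₀ * (K₀ * r))) := by
      rw [← setLIntegral_const {ω | (x₀ * K₀ + 4) / t * r * Real.log r
        < ∑ j ∈ Finset.range (r+1), (X j ω : ℝ)}
        (ENNReal.ofReal (Real.exp (t * ((x₀ * K₀ + 4) / t * r * Real.log r))))]
      calc ∫⁻ _ω in {ω | (x₀ * K₀ + 4) / t * r * Real.log r
              < ∑ j ∈ Finset.range (r+1), (X j ω : ℝ)},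
            ENNReal.ofReal (Real.exp (t * ((x₀ * K₀ + 4) / t * r * Real.log r))) ∂μ
          ≤ ∫⁻ ω in {ω | (x₀ * K₀ + 4) / t * r * Real.log r
              < ∑ j ∈ Finset.range (r+1), (X j ω : ℝ)},
            ENNReal.ofReal (Real.exp (∑ j ∈ Finset.range (r+1), t * (X j ω : ℝ))) ∂μ := by
            apply setLIntegral_mono
            · exact ENNReal.measurable_ofReal.comp (Real.measurable_exp.comp
                (Finset.measurable_sum _ fun j _ => measurable_const.mul (hmeasR j)))
            · intro ω hω
              apply ENNReal.ofReal_le_ofReal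
              apply Real.exp_le_exp.2
              rw [← Finset.mul_sum]
              exact mul_le_mul_of_nonneg_left (le_of_lt hω) ht.le
        _ ≤ ∫⁻ ω, ENNReal.ofReal (Real.exp (∑ j ∈ Finset.range (r+1),
              t * (X j ω : ℝ))) ∂μ := setLIntegral_le_lintegral _ _
        _ = L r := hLr.symm
        _ ≤ L 0 := hchain r le_rfl
        _ ≤ ENNReal.ofReal (Real.exp (x₀ * (K₀ * r))) := hL0
    have h2 : ENNReal.ofReal (Real.exp (x₀ * (K₀ * r)))
        ≤ ENNReal.ofReal (Real.exp (t * ((x₀ * K₀ + 4) / t * r * Real.log r)))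
          * ENNReal.ofReal (Real.exp (-(4:ℝ) * r)) := by
      rw [← ENNReal.ofReal_mul (Real.exp_pos _).le, ← Real.exp_add]
      apply ENNReal.ofReal_le_ofReal
      apply Real.exp_le_exp.2
      linarith
    have h3 := h1.trans h2
    exact (ENNReal.mul_le_mul_iff_right (by simp [Real.exp_pos]) ENNReal.ofReal_ne_top).1 h3
  -- conclude
  have hcompl : {ω | (∑ i ∈ Finset.range (r + 1), (X i ω : ℝ))
      ≤ (x₀ * K₀ + 4) / t * r * Real.log r}
      = {ω | (x₀ * K₀ + 4) / t * r * Real.log r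
          < ∑ j ∈ Finset.range (r+1), (X j ω : ℝ)}ᶜ := by
    ext ω
    simp [not_lt]
  rw [hcompl, prob_compl_eq_one_sub hGcmeas]
  calc ENNReal.ofReal (1 - 2 * Real.exp (-3 * r))
      ≤ 1 - ENNReal.ofReal (Real.exp (-(4:ℝ) * r)) := by
        rw [show (1:ℝ≥0∞) = ENNReal.ofReal 1 from ENNReal.ofReal_one.symm,
          ← ENNReal.ofReal_sub _ (Real.exp_pos _).le]
        apply ENNReal.ofReal_le_ofReal
        have hmono : Real.exp (-(4:ℝ) * r) ≤ Real.exp (-3 * r) := by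
          apply Real.exp_le_exp.2
          nlinarith
        linarith [Real.exp_pos (-3 * (r:ℝ))]
    _ ≤ 1 - μ {ω | (x₀ * K₀ + 4) / t * r * Real.log r
          < ∑ j ∈ Finset.range (r+1), (X j ω : ℝ)} := tsub_le_tsub_left hbound 1
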